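/- Let p be prime, S ⊆ Z/pZ, and let V ⊆ (Z/pZ)^ℓ be a family closed under scalar multiplication by nonzero elements. Suppose V can be partitioned into K disjoint S-covering subfamilies V₁,...,V_K, each of size at least N. Then for every integer m ≥ 1 and every nonzero a ∈ Z/pZ, there exists an (aS ∪ S)-covering family V' ⊆ V^{m-1} (vectors of length (m-1)ℓ formed by concatenating m-1 elements of V) of size at least N^m / |V|. -/

import Mathlib

/-- Chain-building lemma: given a "next part" map each of whose values has size
at least `N`, for every length `n` and start `v₀` there is a family of chains of
size at least `N ^ n`. -/
lemma stmt13_chain {α : Type*} [DecidableEq α] (N : ℕ) (nxt : α → Finset α)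
    (hnxt : ∀ v, N ≤ (nxt v).card) :
    ∀ (n : ℕ) (v₀ : α), ∃ W : Finset (Fin n → α),
      N ^ n ≤ W.card ∧
      ∀ w ∈ W, ∀ j : Fin n,
        w j ∈ nxt (if 0 < (j : ℕ) then
          w ⟨(j : ℕ) - 1, lt_of_le_of_lt (Nat.sub_le _ _) j.2⟩ else v₀) := by
  intro n
  induction n with
  | zero =>
      intro v₀
      exact ⟨{fun j => j.elim0}, by simp, fun w _ j => j.elim0⟩
  | succ n ih =>
      intro v₀
      choose Wf hWcard hWchain using ih
      have hconsinj : ∀ x : α, Function.Injective (Fin.cons (n := n) (α := fun _ => α) x) := by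
        intro x w w' h
        funext j
        have := congrFun h j.succ
        simpa [Fin.cons_succ] using this
      refine ⟨(nxt v₀).biUnion
        (fun x => (Wf x).image (Fin.cons (α := fun _ => α) x)), ?_, ?_⟩
      · rw [Finset.card_biUnion]
        · calc N ^ (n + 1) = N ^ n * N := by ring
          _ ≤ N ^ n * (nxt v₀).card := Nat.mul_le_mul_left _ (hnxt v₀)
          _ = ∑ _x ∈ nxt v₀, N ^ n := by rw [Finset.sum_const, smul_eq_mul, mul_comm]
          _ ≤ ∑ x ∈ nxt v₀, ((Wf x).image (Fin.cons (α := fun _ => α) x)).card := by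
              refine Finset.sum_le_sum fun x _ => ?_
              rw [Finset.card_image_of_injective _ (hconsinj x)]
              exact hWcard x
        · intro x _ y _ hxy
          refine Finset.disjoint_left.mpr ?_
          intro u hu hu'
          obtain ⟨w, -, rfl⟩ := Finset.mem_image.mp hu
          obtain ⟨w', -, he⟩ := Finset.mem_image.mp hu'
          exact hxy (by
            have := congrFun he 0
            simpa [Fin.cons_zero] using this.symm)
      · intro u hu j
        obtain ⟨x, hx, hu⟩ := Finset.mem_biUnion.mp hu
        obtain ⟨w, hw, rfl⟩ := Finset.mem_image.mp hu
        rcases j with ⟨jv, hj⟩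
        match jv, hj with
        | 0, hj => simpa [Fin.cons_zero] using hx
        | (k+1), hj =>
            have hk : k < n := Nat.lt_of_succ_lt_succ hj
            have h1 : (⟨k+1, hj⟩ : Fin (n+1)) = (⟨k, hk⟩ : Fin n).succ := rfl
            rw [h1, Fin.cons_succ]
            simp only [Fin.val_succ]
            rw [if_pos (Nat.succ_pos k)]
            have := hWchain x w hw ⟨k, hk⟩
            rcases Nat.eq_zero_or_pos k with rfl | hkpos
            · rw [if_neg (lt_irrefl 0)] at this
              exact this
            · obtain ⟨k', rfl⟩ : ∃ k', k = k' + 1 := ⟨k - 1, by omega⟩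
              rw [if_pos hkpos] at this
              exact this

/-- Alon–Alweiss step: if `V` is closed under nonzero scalar multiplication and is
partitioned into `K ≥ 1` disjoint `S`-covering parts each of size `≥ N`, then for any
`m ≥ 1` and nonzero `a` there is an `(aS ∪ S)`-covering family `V' ⊆ V^(m-1)` of size
at least `N^m / |V|`. -/
theorem stmt13 (p ℓ K N m : ℕ) (hp : p.Prime) (hK : 0 < K) (hm : 1 ≤ m)
    (a : ZMod p) (ha : a ≠ 0) (S : Set (ZMod p))
    (V : Finset (Fin ℓ → ZMod p))
    (hclosed : ∀ c : ZMod p, c ≠ 0 → ∀ v ∈ V, (fun i => c * v i) ∈ V)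
    (P : Fin K → Finset (Fin ℓ → ZMod p))
    (hdisj : ∀ k k' : Fin K, k ≠ k' → Disjoint (P k) (P k'))
    (hunion : Finset.univ.biUnion P = V)
    (hsize : ∀ k, N ≤ (P k).card)
    (hcov : ∀ k, ∀ v ∈ P k, ∀ w ∈ P k, v ≠ w → ∀ t ∈ S, ∃ i, v i - w i = t) :
    ∃ V' : Finset (Fin (m - 1) × Fin ℓ → ZMod p),
      (∀ u ∈ V', ∀ j : Fin (m - 1), (fun i => u (j, i)) ∈ V) ∧
      N ^ m ≤ V'.card * V.card ∧
      (∀ u ∈ V', ∀ u' ∈ V', u ≠ u' →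
        ∀ t ∈ S ∪ (fun x => a * x) '' S, ∃ q, u q - u' q = t) := by
  classical
  haveI : Fact p.Prime := ⟨hp⟩
  rcases Nat.eq_zero_or_pos N with hN | hN
  · refine ⟨∅, by simp, ?_, by simp⟩
    subst hN
    simp [Nat.zero_pow (show 0 < m by omega)]
  -- setup
  have hPV : ∀ k, P k ⊆ V := by
    intro k x hx
    rw [← hunion]
    exact Finset.mem_biUnion.mpr ⟨k, Finset.mem_univ k, hx⟩
  have hptex : ∀ v : Fin ℓ → ZMod p, ∃ k, v ∈ V → v ∈ P k := by
    intro v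
    by_cases hv : v ∈ V
    · rw [← hunion] at hv
      obtain ⟨k, -, hk⟩ := Finset.mem_biUnion.mp hv
      exact ⟨k, fun _ => hk⟩
    · exact ⟨⟨0, hK⟩, fun h => absurd h hv⟩
  choose pt hpt using hptex
  have hpt_uniq : ∀ k k' (v : Fin ℓ → ZMod p), v ∈ P k → v ∈ P k' → k = k' := by
    intro k k' v hk hk'
    by_contra hne
    exact Finset.disjoint_left.mp (hdisj k k' hne) hk hk'
  have hainv : (a⁻¹ : ZMod p) ≠ 0 := inv_ne_zero ha
  have haainv : ∀ c : ZMod p, a * (a⁻¹ * c) = c := by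
    intro c; rw [← mul_assoc, mul_inv_cancel₀ ha, one_mul]
  -- the chain family
  have hPne : (P ⟨0, hK⟩).Nonempty := Finset.card_pos.mp (lt_of_lt_of_le hN (hsize _))
  obtain ⟨v₀, hv₀⟩ := hPne
  have hv₀V : v₀ ∈ V := hPV _ hv₀
  obtain ⟨W, hWcard, hWchain⟩ :=
    stmt13_chain N (fun v => P (pt (fun i => a⁻¹ * v i))) (fun v => hsize _) m v₀
  have hWV : ∀ w ∈ W, ∀ j, w j ∈ V := fun w hw j => hPV _ (hWchain w hw j)
  have hVne : V.Nonempty := ⟨v₀, hv₀V⟩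
  obtain ⟨lst, hlst⟩ : ∃ j : Fin m, (j : ℕ) = m - 1 := ⟨⟨m - 1, by omega⟩, rfl⟩
  have hmaps : ∀ w ∈ W, w lst ∈ V := fun w hw => hWV w hw lst
  have hsum : W.card = ∑ v ∈ V, (W.filter (fun w => w lst = v)).card :=
    Finset.card_eq_sum_card_fiberwise hmaps
  have hex : ∃ v ∈ V, W.card ≤ V.card * (W.filter (fun w => w lst = v)).card := by
    refine Finset.exists_le_of_sum_le hVne (le_of_eq ?_)
    rw [Finset.sum_const, smul_eq_mul, ← Finset.mul_sum, ← hsum]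
  obtain ⟨v, hvV, hfib⟩ := hex
  set F : Finset (Fin m → Fin ℓ → ZMod p) := W.filter (fun w => w lst = v) with hFdef
  have hFW : F ⊆ W := Finset.filter_subset _ _
  have hFlast : ∀ w ∈ F, w lst = v := fun w hw => (Finset.mem_filter.mp hw).2
  have hinj : Set.InjOn
      (fun (w : Fin m → Fin ℓ → ZMod p)
        (q : Fin (m - 1) × Fin ℓ) => w ⟨q.1.1, lt_of_lt_of_le q.1.2 (Nat.sub_le m 1)⟩ q.2)
      F := by
    intro w hw w' hw' he
    funext j
    rcases lt_or_ge (j : ℕ) (m - 1) with hj | hj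
    · funext i
      exact congrFun he (⟨(j : ℕ), hj⟩, i)
    · have hje : j = lst := by
        apply Fin.ext
        have := j.2
        clear * - this hj hlst
        omega
      rw [hje, hFlast w hw, hFlast w' hw']
  refine ⟨F.image (fun w q => w ⟨q.1.1, lt_of_lt_of_le q.1.2 (Nat.sub_le m 1)⟩ q.2),
    ?_, ?_, ?_⟩
  · intro u hu j
    obtain ⟨w, hw, rfl⟩ := Finset.mem_image.mp hu
    simpa using hWV w (hFW hw) ⟨(j : ℕ), lt_of_lt_of_le j.2 (Nat.sub_le m 1)⟩
  · rw [Finset.card_image_of_injOn hinj]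
    calc N ^ m ≤ W.card := hWcard
      _ ≤ V.card * F.card := hfib
      _ = F.card * V.card := mul_comm _ _
  · intro u hu u' hu' hne t ht
    obtain ⟨w, hw, rfl⟩ := Finset.mem_image.mp hu
    obtain ⟨w', hw', rfl⟩ := Finset.mem_image.mp hu'
    have hww' : w ≠ w' := fun h => hne (by rw [h])
    set D : Finset (Fin m) := Finset.univ.filter (fun j => w j ≠ w' j) with hDdef
    have hDne : D.Nonempty := by
      by_contra hc
      apply hww'
      funext j
      by_contra hj
      exact hc ⟨j, Finset.mem_filter.mpr ⟨Finset.mem_univ _, hj⟩⟩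
    obtain ⟨jmin, hjminD, hjminle⟩ : ∃ j ∈ D, ∀ j' ∈ D, j ≤ j' :=
      ⟨D.min' hDne, D.min'_mem hDne, fun j' hj' => D.min'_le j' hj'⟩
    obtain ⟨jmax, hjmaxD, hjmaxge⟩ : ∃ j ∈ D, ∀ j' ∈ D, j' ≤ j :=
      ⟨D.max' hDne, D.max'_mem hDne, fun j' hj' => D.le_max' j' hj'⟩
    have hjmaxlt : (jmax : ℕ) < m - 1 := by
      have h1 : jmax ≠ lst := by
        intro h
        have := (Finset.mem_filter.mp hjmaxD).2
        rw [h, hFlast w hw, hFlast w' hw'] at this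
        exact this rfl
      have h2 := jmax.2
      have h3 : (jmax : ℕ) ≠ m - 1 := fun h => h1 (Fin.ext (h.trans hlst.symm))
      clear * - h2 h3
      omega
    have hminmax : (jmin : ℕ) ≤ (jmax : ℕ) := hjminle jmax hjmaxD
    have hjminlt : (jmin : ℕ) < m - 1 := lt_of_le_of_lt hminmax hjmaxlt
    rcases ht with htS | ⟨s, hsS, rfl⟩
    · -- t ∈ S : use jmin
      have hneq : w jmin ≠ w' jmin := (Finset.mem_filter.mp hjminD).2
      have hprev : (if 0 < (jmin : ℕ) then
            w ⟨(jmin : ℕ) - 1, lt_of_le_of_lt (Nat.sub_le _ _) jmin.2⟩ else v₀)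
          = (if 0 < (jmin : ℕ) then
            w' ⟨(jmin : ℕ) - 1, lt_of_le_of_lt (Nat.sub_le _ _) jmin.2⟩ else v₀) := by
        by_cases h : 0 < (jmin : ℕ)
        · rw [if_pos h, if_pos h]
          have hnot : (⟨(jmin : ℕ) - 1, lt_of_le_of_lt (Nat.sub_le _ _) jmin.2⟩ : Fin m)
              ∉ D := by
            intro hmem
            have h5 := hjminle _ hmem
            have h6 : (jmin : ℕ) ≤ (jmin : ℕ) - 1 := h5
            clear * - h h6
            omega
          by_contra hc
          exact hnot (Finset.mem_filter.mpr ⟨Finset.mem_univ _, hc⟩)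
        · rw [if_neg h, if_neg h]
      have h1 := hWchain w (hFW hw) jmin
      have h2 := hWchain w' (hFW hw') jmin
      rw [hprev] at h1
      obtain ⟨i, hi⟩ := hcov _ _ h1 _ h2 hneq t htS
      exact ⟨(⟨(jmin : ℕ), hjminlt⟩, i), hi⟩
    · -- t = a * s : use jmax
      have hneq : w jmax ≠ w' jmax := (Finset.mem_filter.mp hjmaxD).2
      have hjp : (jmax : ℕ) + 1 < m := by clear * - hjmaxlt hm; omega
      have hjPnot : (⟨(jmax : ℕ) + 1, hjp⟩ : Fin m) ∉ D := by
        intro hmem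
        have h5 := hjmaxge _ hmem
        have h6 : ((jmax : ℕ) + 1 : ℕ) ≤ (jmax : ℕ) := h5
        clear * - h6
        omega
      have hjPeq : w ⟨(jmax : ℕ) + 1, hjp⟩ = w' ⟨(jmax : ℕ) + 1, hjp⟩ := by
        by_contra hc
        exact hjPnot (Finset.mem_filter.mpr ⟨Finset.mem_univ _, hc⟩)
      have h1 := hWchain w (hFW hw) ⟨(jmax : ℕ) + 1, hjp⟩
      have h2 := hWchain w' (hFW hw') ⟨(jmax : ℕ) + 1, hjp⟩
      rw [if_pos (Nat.succ_pos _)] at h1 h2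
      simp only [Nat.add_sub_cancel] at h1 h2
      rw [hjPeq] at h1
      -- h1 : w' jP ∈ P (pt (a⁻¹ • w jmax)), h2 : w' jP ∈ P (pt (a⁻¹ • w' jmax))
      have hxV : (fun i => a⁻¹ * w jmax i) ∈ V :=
        hclosed _ hainv _ (hWV w (hFW hw) jmax)
      have hx'V : (fun i => a⁻¹ * w' jmax i) ∈ V :=
        hclosed _ hainv _ (hWV w' (hFW hw') jmax)
      have hxP := hpt _ hxV
      have hx'P := hpt _ hx'V
      have hpteq : pt (fun i => a⁻¹ * w jmax i) = pt (fun i => a⁻¹ * w' jmax i) :=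
        hpt_uniq _ _ _ h1 h2
      rw [hpteq] at hxP
      have hxne : (fun i => a⁻¹ * w jmax i) ≠ (fun i => a⁻¹ * w' jmax i) := by
        intro h
        apply hneq
        funext i
        have h7 : a⁻¹ * w jmax i = a⁻¹ * w' jmax i := congrFun h i
        calc w jmax i = a * (a⁻¹ * w jmax i) := (haainv _).symm
          _ = a * (a⁻¹ * w' jmax i) := by rw [h7]
          _ = w' jmax i := haainv _
      obtain ⟨i, hi⟩ := hcov _ _ hxP _ hx'P hxne s hsS
      refine ⟨(⟨(jmax : ℕ), hjmaxlt⟩, i), ?_⟩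
      show w jmax i - w' jmax i = a * s
      have h8 := congrArg (fun c => a * c) hi
      simp only [mul_sub] at h8
      rwa [haainv, haainv] at h8
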